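/- With the setup of orbit points xᵢ = ξ^{i−1}(O) for i > 0 and ξ^{i}(O) for i < 0 along an axis τ of a hyperbolic isometry ξ with minimal displacement L ≥ 300δ and |O ξ(O)| ≤ L + ε (ε < δ), let pᵢ be projections of xᵢ to τ. Then |xᵢ pᵢ| ≤ 28δ, and for adjacent indices i, j one has |L − |pᵢ pⱼ|| ≤ 56δ + ε; consequently the points pᵢ lie on τ in the order induced by ℤ* = ℤ∖{0}. -/

import Mathlib

open Metric Set

variable {X : Type*} [MetricSpace X]

/-- Four-point condition for δ-hyperbolicity. -/
def FourPointHyp (X : Type*) [MetricSpace X] (δ : ℝ) : Prop :=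
  ∀ x y z w : X,
    dist x y + dist z w ≤ max (dist x z + dist y w) (dist y z + dist x w) + 2 * δ

/-- `s` is a geodesic segment from `a` to `b`. -/
def IsGeodSegment {X : Type*} [MetricSpace X] (a b : X) (s : Set X) : Prop :=
  ∃ f : ℝ → X, f 0 = a ∧ f (dist a b) = b ∧
    (∀ u ∈ Icc (0:ℝ) (dist a b), ∀ v ∈ Icc (0:ℝ) (dist a b),
      dist (f u) (f v) = |u - v|) ∧
    s = f '' Icc (0:ℝ) (dist a b)

/-- `X` is a geodesic space. -/
def IsGeodesicSpace (X : Type*) [MetricSpace X] : Prop :=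
  ∀ a b : X, ∃ s : Set X, IsGeodSegment a b s

/-- `τ : ℝ → X` is a geodesic line. -/
def IsGeodLine (τ : ℝ → X) : Prop := ∀ u v : ℝ, dist (τ u) (τ v) = |u - v|

/-- An isometry is hyperbolic if the orbit map `n ↦ ξⁿ(x)` is a quasi-isometric
embedding of `ℤ` into `X`. -/
def IsHypIsom (ξ : X ≃ᵢ X) : Prop :=
  ∃ x : X, ∃ A : ℝ, 0 < A ∧ ∃ B : ℝ, ∀ m n : ℤ,
    A * |(m : ℝ) - (n : ℝ)| - B ≤ dist ((ξ ^ m) x) ((ξ ^ n) x)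

/-- An axis of `ξ`: a geodesic line joining the two fixed points of `ξ` at infinity,
equivalently a geodesic line whose image is at finite Hausdorff distance from its
`ξ`-image. -/
def IsAxis (ξ : X ≃ᵢ X) (τ : ℝ → X) : Prop :=
  IsGeodLine τ ∧ ∃ C : ℝ,
    (∀ t : ℝ, infDist (ξ (τ t)) (range τ) ≤ C) ∧
    (∀ t : ℝ, infDist (τ t) (range fun s => ξ (τ s)) ≤ C)

/-- The orbit points `x₁ = O`, `xᵢ = ξ^{i-1}(O)` for `i > 0`, `xᵢ = ξ^{i}(O)` for
`i < 0`. -/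
noncomputable def orbitPt (ξ : X ≃ᵢ X) (O : X) (i : ℤ) : X :=
  if 0 < i then (ξ ^ (i - 1)) O else (ξ ^ i) O

/-- The Voronoi cell `Dᵢ` of the orbit point `xᵢ`. -/
noncomputable def vorCell (ξ : X ≃ᵢ X) (O : X) (i : ℤ) : Set X :=
  {y : X | ∀ j : ℤ, j ≠ 0 → dist y (orbitPt ξ O i) ≤ dist y (orbitPt ξ O j)}

/-- Indices `i, j ∈ ℤ* = ℤ∖{0}` are adjacent (consecutive in `ℤ*`, where `-1` and
`1` are adjacent). -/
def AdjIdx (i j : ℤ) : Prop :=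
  i ≠ 0 ∧ j ≠ 0 ∧ (j = i + 1 ∨ (i = -1 ∧ j = 1))


namespace S11

variable {X : Type*} [MetricSpace X] {δ : ℝ}

lemma hyp_gromov (hyp : FourPointHyp X δ) (x y z w : X) :
    min (dist x w + dist y w - dist x y) (dist y w + dist z w - dist y z)
      ≤ dist x w + dist z w - dist x z + 2 * δ := by
  have h := hyp x z y w
  have hc : dist z y = dist y z := dist_comm z y
  rcases max_cases (dist x y + dist z w) (dist z y + dist x w) with ⟨h1, _⟩ | ⟨h1, _⟩ <;>
    rw [h1] at h
  · have := min_le_left (dist x w + dist y w - dist x y)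
      (dist y w + dist z w - dist y z)
    linarith
  · have := min_le_right (dist x w + dist y w - dist x y)
      (dist y w + dist z w - dist y z)
    linarith

lemma core (hδ : 0 < δ) (hyp : FourPointHyp X δ)
    (a b c p m : X) (r : ℝ)
    (hap : dist a p = r) (hpb : dist a p + dist p b = dist a b)
    (ham : dist a m = r) (hmc : dist a m + dist m c = dist a c)
    (hr : 2 * r ≤ dist a b + dist a c - dist b c) :
    dist p m ≤ 4 * δ := by
  have hA := hyp_gromov hyp p b c a
  have hB := hyp_gromov hyp p c m a
  have e1 : dist p a = r := by rw [dist_comm]; exact hap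
  have e2 : dist b a = dist a b := dist_comm b a
  have e3 : dist c a = dist a c := dist_comm c a
  have e4 : dist m a = r := by rw [dist_comm]; exact ham
  have e5 : dist c m = dist m c := dist_comm c m
  rcases min_cases (dist p a + dist b a - dist p b) (dist b a + dist c a - dist b c)
    with ⟨hm1, hm1'⟩ | ⟨hm1, hm1'⟩ <;> rw [hm1] at hA <;>
  rcases min_cases (dist p a + dist c a - dist p c) (dist c a + dist m a - dist c m)
    with ⟨hm2, hm2'⟩ | ⟨hm2, hm2'⟩ <;> rw [hm2] at hB <;> linarith

/-- A convenient parametrization of a geodesic from `a` to `b`. -/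
def GeodParam {X : Type*} [MetricSpace X] (a b : X) (f : ℝ → X) : Prop :=
  ∀ u ∈ Icc (0:ℝ) (dist a b), dist a (f u) = u ∧ dist (f u) b = dist a b - u

lemma geodParam_of (hgeo : IsGeodesicSpace X) (a b : X) : ∃ f, GeodParam a b f := by
  obtain ⟨s, f, h0, hd, hiso, _⟩ := hgeo a b
  refine ⟨f, fun u hu => ⟨?_, ?_⟩⟩
  · have := hiso 0 ⟨le_refl 0, dist_nonneg⟩ u hu
    rw [h0] at this
    rw [this, abs_sub_comm, abs_of_nonneg (by linarith [hu.1] : (0:ℝ) ≤ u - 0)]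
    ring
  · have := hiso u hu (dist a b) ⟨dist_nonneg, le_refl _⟩
    rw [hd] at this
    rw [this, abs_sub_comm, abs_of_nonneg (by linarith [hu.2] : (0:ℝ) ≤ dist a b - u)]

lemma geodParam_line {τ : ℝ → X} (hτ : IsGeodLine τ) (s1 s2 : ℝ) :
    ∃ f, GeodParam (τ s1) (τ s2) f ∧ ∀ u, f u ∈ range τ := by
  refine ⟨fun u => τ (s1 + (if s1 ≤ s2 then u else -u)), fun u hu => ?_,
    fun u => mem_range_self _⟩
  have hd : dist (τ s1) (τ s2) = |s1 - s2| := hτ s1 s2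
  rw [hd] at hu
  constructor
  · rw [hτ]
    split_ifs <;> rw [abs_sub_comm] <;>
      [rw [abs_of_nonneg (by linarith [hu.1] : (0:ℝ) ≤ s1 + u - s1)];
       rw [abs_of_nonpos (by linarith [hu.1] : s1 + -u - s1 ≤ (0:ℝ))]] <;> ring
  · rw [hτ, hd]
    rcases le_or_gt s1 s2 with h | h
    · have h2 : u ≤ s2 - s1 := by
        have h3 := hu.2
        rw [abs_of_nonpos (by linarith : s1 - s2 ≤ (0:ℝ))] at h3
        linarith
      rw [if_pos h, abs_of_nonpos (by linarith : s1 + u - s2 ≤ (0:ℝ)),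
        abs_of_nonpos (by linarith : s1 - s2 ≤ (0:ℝ))]
      ring
    · have h2 : u ≤ s1 - s2 := by
        have h3 := hu.2
        rw [abs_of_nonneg (by linarith : (0:ℝ) ≤ s1 - s2)] at h3
        linarith
      rw [if_neg (not_le.mpr h), abs_of_nonneg (by linarith : (0:ℝ) ≤ s1 + -u - s2),
        abs_of_nonneg (by linarith : (0:ℝ) ≤ s1 - s2)]
      ring

lemma slim (hδ : 0 < δ) (hyp : FourPointHyp X δ)
    (a b c p : X) (fac fbc : ℝ → X)
    (hbtw : dist a p + dist p b = dist a b)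
    (h1 : GeodParam a c fac) (h2 : GeodParam b c fbc) :
    (∃ u ∈ Icc (0:ℝ) (dist a c), dist p (fac u) ≤ 4 * δ) ∨
    (∃ u ∈ Icc (0:ℝ) (dist b c), dist p (fbc u) ≤ 4 * δ) := by
  by_cases hr : 2 * dist a p ≤ dist a b + dist a c - dist b c
  · left
    have hmem : dist a p ∈ Icc (0:ℝ) (dist a c) := by
      refine ⟨dist_nonneg, ?_⟩
      have := dist_triangle a c b
      have hcb : dist c b = dist b c := dist_comm c b
      linarith
    obtain ⟨ham, hmc⟩ := h1 _ hmem
    exact ⟨dist a p, hmem, core hδ hyp a b c p _ (dist a p) rfl hbtw ham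
      (by linarith) hr⟩
  · right
    push_neg at hr
    have hbp : dist b p = dist a b - dist a p := by
      rw [dist_comm b p]; linarith
    have hr' : 2 * dist b p ≤ dist b a + dist b c - dist a c := by
      have := dist_comm b a
      linarith
    have hmem : dist b p ∈ Icc (0:ℝ) (dist b c) := by
      refine ⟨dist_nonneg, ?_⟩
      have := dist_triangle b c a
      have := dist_comm c a
      have := dist_comm b a
      linarith
    obtain ⟨ham, hmc⟩ := h2 _ hmem
    refine ⟨dist b p, hmem, core hδ hyp b a c p _ (dist b p) rfl ?_ ham
      (by linarith) hr'⟩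
    rw [dist_comm p a, dist_comm b a]
    linarith [dist_comm a p]

lemma lineClose {C : ℝ} (hδ : 0 < δ) (hyp : FourPointHyp X δ) (hgeo : IsGeodesicSpace X)
    (g h : ℝ → X) (hg : IsGeodLine g) (hh : IsGeodLine h)
    (hC : ∀ t, infDist (g t) (range h) ≤ C) (t : ℝ) :
    infDist (g t) (range h) ≤ 8 * δ := by
  have hC0 : 0 ≤ C := le_trans infDist_nonneg (hC 0)
  set R : ℝ := C + 1 + 9 * δ with hR
  set a : X := g (t - R)
  set b : X := g (t + R)
  set p : X := g t
  have hne : (range h).Nonempty := ⟨h 0, mem_range_self 0⟩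
  have hab : dist a b = 2 * R := by
    rw [hg]; rw [abs_of_nonpos (by linarith : t - R - (t + R) ≤ 0)]; ring
  have hap : dist a p = R := by
    rw [hg]; rw [abs_of_nonpos (by linarith : t - R - t ≤ 0)]; ring
  have hpb : dist p b = R := by
    rw [hg]; rw [abs_of_nonpos (by linarith : t - (t + R) ≤ 0)]; ring
  obtain ⟨a', ha'mem, ha'⟩ := (infDist_lt_iff hne).mp
    (lt_of_le_of_lt (hC (t - R)) (by linarith : C < C + 1))
  obtain ⟨b', hb'mem, hb'⟩ := (infDist_lt_iff hne).mp
    (lt_of_le_of_lt (hC (t + R)) (by linarith : C < C + 1))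
  obtain ⟨s1, rfl⟩ := ha'mem
  obtain ⟨s2, rfl⟩ := hb'mem
  obtain ⟨f1, hf1⟩ := geodParam_of hgeo a (h s2)
  obtain ⟨f2, hf2⟩ := geodParam_of hgeo b (h s2)
  rcases slim hδ hyp a b (h s2) p f1 f2 (by rw [hab, hap, hpb]; ring) hf1 hf2 with
    ⟨u, hu, hq⟩ | ⟨u, hu, hq⟩
  · set q : X := f1 u
    obtain ⟨haq, hqb'⟩ := hf1 u hu
    obtain ⟨f3, hf3⟩ := geodParam_of hgeo a (h s1)
    obtain ⟨f4, hf4, hf4r⟩ := geodParam_line hh s2 s1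
    rcases slim hδ hyp a (h s2) (h s1) q f3 f4 (by rw [haq]; linarith [hqb']) hf3 hf4 with
      ⟨v, hv, hqv⟩ | ⟨v, hv, hqv⟩
    · exfalso
      obtain ⟨hav, _⟩ := hf3 v hv
      have h1 : dist p a ≤ dist p q + dist q (f3 v) + dist (f3 v) a := dist_triangle4 _ _ _ _
      have h2 : dist (f3 v) a = v := by rw [dist_comm]; exact hav
      have h3 : v ≤ dist a (h s1) := hv.2
      have h4 : dist p a = R := by rw [dist_comm]; exact hap
      linarith
    · have hle : dist p (f4 v) ≤ 8 * δ := by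
        have := dist_triangle p q (f4 v)
        linarith
      exact le_trans (infDist_le_dist_of_mem (hf4r v)) hle
  · exfalso
    obtain ⟨hbq, _⟩ := hf2 u hu
    have h1 : dist p b ≤ dist p (f2 u) + dist (f2 u) b := dist_triangle _ _ _
    have h2 : dist (f2 u) b = u := by rw [dist_comm]; exact hbq
    have h3 : u ≤ dist b (h s2) := hu.2
    linarith [hpb]

lemma projLem (hδ : 0 < δ) (hyp : FourPointHyp X δ)
    {τ : ℝ → X} (hτ : IsGeodLine τ) (y : X) (t0 s : ℝ)
    (hmin : ∀ u, dist y (τ t0) ≤ dist y (τ u)) :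
    dist y (τ t0) + |t0 - s| - 5 * δ ≤ dist y (τ s) := by
  by_cases hsmall : |t0 - s| ≤ 3 * δ
  · linarith [hmin s]
  · push_neg at hsmall
    set v : ℝ := t0 + (if t0 ≤ s then 3*δ else -(3*δ)) with hv
    have e1 : dist (τ t0) (τ v) = 3 * δ := by
      rw [hτ, hv]
      split_ifs <;> [rw [abs_of_nonpos (by linarith : t0 - (t0 + 3*δ) ≤ 0)];
        rw [abs_of_nonneg (by linarith : (0:ℝ) ≤ t0 - (t0 + -(3*δ)))]] <;> ring
    have e2 : dist (τ v) (τ s) = |t0 - s| - 3 * δ := by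
      rw [hτ, hv]
      rcases le_or_gt t0 s with h | h
      · rw [if_pos h]
        rw [abs_of_nonpos (by linarith : t0 - s ≤ 0)] at *
        rw [abs_of_nonpos (by linarith : t0 + 3*δ - s ≤ 0)]; ring
      · rw [if_neg (not_le.mpr h)]
        rw [abs_of_nonneg (by linarith : (0:ℝ) ≤ t0 - s)] at *
        rw [abs_of_nonneg (by linarith : (0:ℝ) ≤ t0 + -(3*δ) - s)]; ring
    have h4 := hyp y (τ v) (τ t0) (τ s)
    have e3 : dist (τ t0) (τ s) = |t0 - s| := hτ t0 s
    have e4 : dist (τ v) (τ t0) = 3 * δ := by rw [dist_comm]; exact e1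
    have e6 := hmin v
    rcases max_cases (dist y (τ t0) + dist (τ v) (τ s)) (dist (τ v) (τ t0) + dist y (τ s))
      with ⟨hm, _⟩ | ⟨hm, _⟩ <;> rw [hm] at h4 <;> linarith

lemma twoProj (hδ : 0 < δ) (hyp : FourPointHyp X δ)
    {τ : ℝ → X} (hτ : IsGeodLine τ) (y z : X) (t1 t2 : ℝ)
    (h1 : ∀ u, dist y (τ t1) ≤ dist y (τ u))
    (h2 : ∀ u, dist z (τ t2) ≤ dist z (τ u))
    (hfar : 6 * δ < |t1 - t2|) :
    dist y (τ t1) + |t1 - t2| + dist z (τ t2) - 12 * δ ≤ dist y z := by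
  have p1 := projLem hδ hyp hτ y t1 t2 h1
  have p2 := projLem hδ hyp hτ z t2 t1 h2
  have habs : |t2 - t1| = |t1 - t2| := abs_sub_comm t2 t1
  have h4 := hyp y (τ t2) z (τ t1)
  have e1 : dist (τ t2) (τ t1) = |t1 - t2| := by rw [hτ, habs]
  rcases max_cases (dist y z + dist (τ t2) (τ t1)) (dist (τ t2) z + dist y (τ t1))
    with ⟨hm, _⟩ | ⟨hm, _⟩ <;> rw [hm] at h4
  · linarith
  · exfalso
    have hcm : dist (τ t2) z = dist z (τ t2) := dist_comm _ _
    linarith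

lemma disp2 {L : ℝ} (hδ : 0 < δ) (hyp : FourPointHyp X δ) (hgeo : IsGeodesicSpace X)
    (ξ : X ≃ᵢ X) (hdisp : ∀ x : X, L ≤ dist x (ξ x)) (hL4 : 4 * δ < L)
    (y : X) :
    dist y (ξ y) + L - 4 * δ ≤ dist y (ξ (ξ y)) := by
  set u : ℝ := dist y (ξ y) with hu
  have hu0 : 0 ≤ u := dist_nonneg
  obtain ⟨f, hf⟩ := geodParam_of hgeo y (ξ y)
  have hmem : u/2 ∈ Icc (0:ℝ) (dist y (ξ y)) := ⟨by linarith, by rw [← hu]; linarith⟩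
  obtain ⟨hym, hmxy⟩ := hf _ hmem
  set m : X := f (u/2)
  have e1 : dist m (ξ y) = u/2 := by rw [hmxy, ← hu]; ring
  have e2 : dist (ξ m) (ξ y) = u/2 := by rw [ξ.dist_eq, dist_comm]; exact hym
  have e3 : dist (ξ (ξ y)) (ξ y) = u := by rw [dist_comm, ξ.dist_eq]
  have e4 : dist (ξ (ξ y)) (ξ m) = u/2 := by rw [ξ.dist_eq, dist_comm]; exact e1
  have e5 : dist m y = u/2 := by rw [dist_comm]; exact hym
  have hL' := hdisp m
  have hA := hyp_gromov hyp m y (ξ (ξ y)) (ξ y)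
  have hB := hyp_gromov hyp m (ξ (ξ y)) (ξ m) (ξ y)
  rcases min_cases (dist m (ξ y) + dist y (ξ y) - dist m y)
      (dist y (ξ y) + dist (ξ (ξ y)) (ξ y) - dist y (ξ (ξ y)))
    with ⟨hm1, hm1'⟩ | ⟨hm1, hm1'⟩ <;> rw [hm1] at hA <;>
  rcases min_cases (dist m (ξ y) + dist (ξ (ξ y)) (ξ y) - dist m (ξ (ξ y)))
      (dist (ξ (ξ y)) (ξ y) + dist (ξ m) (ξ y) - dist (ξ (ξ y)) (ξ m))
    with ⟨hm2, hm2'⟩ | ⟨hm2, hm2'⟩ <;> rw [hm2] at hB <;> linarith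

def nxt (i : ℤ) : ℤ := if i = -1 then 1 else i + 1

lemma nxt_ne_zero (i : ℤ) (hi : i ≠ 0) : nxt i ≠ 0 := by
  unfold nxt; split_ifs with h
  · norm_num
  · omega

lemma zpow_apply_add (ξ : X ≃ᵢ X) (a b : ℤ) (O : X) :
    (ξ ^ (a + b)) O = (ξ ^ a) ((ξ ^ b) O) := by rw [zpow_add]; rfl

lemma apply_zpow (ξ : X ≃ᵢ X) (k : ℤ) (O : X) :
    ξ ((ξ ^ k) O) = (ξ ^ (k + 1)) O := by
  rw [add_comm, zpow_apply_add, zpow_one]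

lemma orbit_nxt (ξ : X ≃ᵢ X) (O : X) (i : ℤ) (hi : i ≠ 0) :
    orbitPt ξ O (nxt i) = ξ (orbitPt ξ O i) := by
  rcases eq_or_ne i (-1) with rfl | h1
  · rw [show nxt (-1) = 1 from rfl]
    unfold orbitPt
    rw [if_pos (by norm_num : (0:ℤ) < 1), if_neg (by norm_num : ¬ (0:ℤ) < -1),
      apply_zpow]
    norm_num
  · have hn : nxt i = i + 1 := if_neg h1
    rw [hn]; unfold orbitPt
    rcases hi.lt_or_gt with hneg | hpos
    · rw [if_neg (by omega : ¬ (0:ℤ) < i + 1), if_neg (by omega : ¬ (0:ℤ) < i),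
        apply_zpow]
    · rw [if_pos (by omega : (0:ℤ) < i + 1), if_pos hpos, apply_zpow,
        show i + 1 - 1 = i - 1 + 1 by ring]

lemma disp_zpow (ξ : X ≃ᵢ X) (k : ℤ) (O : X) :
    dist ((ξ ^ k) O) (ξ ((ξ ^ k) O)) = dist O (ξ O) := by
  rw [apply_zpow, zpow_apply_add ξ k 1, IsometryEquiv.dist_eq, zpow_one]

lemma disp_orbit (ξ : X ≃ᵢ X) (O : X) (i : ℤ) :
    dist (orbitPt ξ O i) (ξ (orbitPt ξ O i)) = dist O (ξ O) := by
  unfold orbitPt; split_ifs <;> rw [disp_zpow]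

end S11

/-- For the orbit points `xᵢ` of a hyperbolic isometry `ξ` along its axis `τ`
(minimal displacement `L ≥ 300δ`, `|O ξ(O)| ≤ L + ε`, `0 < ε < δ`), with
nearest-point projections `pᵢ` of `xᵢ` to `τ`: `|xᵢ pᵢ| ≤ 28δ`, for adjacent
`i, j` one has `|L − |pᵢpⱼ|| ≤ 56δ + ε`, and the `pᵢ` lie on `τ` in the order
induced by `ℤ*`. -/
theorem stmt11 {X : Type*} [MetricSpace X] [ProperSpace X] (δ ε L : ℝ)
    (hδ : 0 < δ) (hε : 0 < ε) (hεδ : ε < δ)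
    (hyp : FourPointHyp X δ) (hgeo : IsGeodesicSpace X)
    (ξ : X ≃ᵢ X) (hhyp : IsHypIsom ξ) (τ : ℝ → X) (hax : IsAxis ξ τ)
    (hL : L = ⨅ x : X, dist x (ξ x)) (hL300 : 300 * δ ≤ L)
    (O : X) (hO : dist O (ξ O) ≤ L + ε)
    (p : ℤ → X)
    (hp : ∀ i : ℤ, i ≠ 0 → p i ∈ range τ ∧
      dist (orbitPt ξ O i) (p i) = infDist (orbitPt ξ O i) (range τ)) :
    (∀ i : ℤ, i ≠ 0 → dist (orbitPt ξ O i) (p i) ≤ 28 * δ) ∧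
    (∀ i j : ℤ, AdjIdx i j → |L - dist (p i) (p j)| ≤ 56 * δ + ε) ∧
    (∃ t : ℤ → ℝ, (∀ i : ℤ, i ≠ 0 → τ (t i) = p i) ∧
      ((∀ i j : ℤ, i ≠ 0 → j ≠ 0 → i < j → t i < t j) ∨
       (∀ i j : ℤ, i ≠ 0 → j ≠ 0 → i < j → t j < t i))) := by
  classical
  obtain ⟨hτline, C, hC1, hC2⟩ := hax
  have hξτ : IsGeodLine (fun s => ξ (τ s)) := fun u v => by
    simpa [ξ.dist_eq] using hτline u v
  have hclose1 : ∀ s : ℝ, infDist (ξ (τ s)) (range τ) ≤ 8*δ :=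
    S11.lineClose hδ hyp hgeo (fun s => ξ (τ s)) τ hξτ hτline hC1
  have hclose2 : ∀ s : ℝ, infDist (τ s) (range fun s => ξ (τ s)) ≤ 8*δ :=
    S11.lineClose hδ hyp hgeo τ (fun s => ξ (τ s)) hτline hξτ hC2
  have hdisp : ∀ x : X, L ≤ dist x (ξ x) := by
    intro x
    rw [hL]
    exact ciInf_le ⟨0, fun r ⟨x, hx⟩ => hx ▸ dist_nonneg⟩ x
  have hts : ∀ i : ℤ, ∃ s : ℝ, i ≠ 0 → τ s = p i := by
    intro i
    by_cases hi : i = 0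
    · exact ⟨0, fun h => absurd hi h⟩
    · obtain ⟨⟨s, hs⟩, -⟩ := hp i hi
      exact ⟨s, fun _ => hs⟩
  choose T hT using hts
  have hmin : ∀ i : ℤ, i ≠ 0 → ∀ v : ℝ,
      dist (orbitPt ξ O i) (τ (T i)) ≤ dist (orbitPt ξ O i) (τ v) := by
    intro i hi v
    rw [hT i hi, (hp i hi).2]
    exact infDist_le_dist_of_mem (mem_range_self v)
  -- Part 1
  have part1 : ∀ i : ℤ, i ≠ 0 → dist (orbitPt ξ O i) (p i) ≤ 28 * δ := by
    intro i hi
    have hjne : S11.nxt i ≠ 0 := S11.nxt_ne_zero i hi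
    have hzy : orbitPt ξ O (S11.nxt i) = ξ (orbitPt ξ O i) := S11.orbit_nxt ξ O i hi
    set y := orbitPt ξ O i with hy
    set z := orbitPt ξ O (S11.nxt i) with hz
    set D := dist y (p i) with hD
    set D' := dist z (p (S11.nxt i)) with hD'
    have hpi : τ (T i) = p i := hT i hi
    have hpj : τ (T (S11.nxt i)) = p (S11.nxt i) := hT _ hjne
    obtain ⟨w, hwmem, hw⟩ := (infDist_lt_iff ⟨τ 0, mem_range_self 0⟩).mp
      (lt_of_le_of_lt (hclose1 (T i)) (by linarith : 8*δ < 9*δ))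
    obtain ⟨sw, rfl⟩ := hwmem
    have hzxi : dist z (ξ (τ (T i))) = D := by
      rw [hzy, ξ.dist_eq, hpi]
    have ha : D' ≤ D + 9 * δ := by
      have h1 : D' ≤ dist z (τ sw) := by
        rw [hD', (hp _ hjne).2]
        exact infDist_le_dist_of_mem (mem_range_self sw)
      have h2 := dist_triangle z (ξ (τ (T i))) (τ sw)
      linarith
    have ha' : D ≤ D' + 9 * δ := by
      obtain ⟨v, hvmem, hv⟩ := (infDist_lt_iff ⟨ξ (τ 0), mem_range_self 0⟩).mp
        (lt_of_le_of_lt (hclose2 (T (S11.nxt i))) (by linarith : 8*δ < 9*δ))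
      obtain ⟨sv, rfl⟩ := hvmem
      have h1 : D ≤ dist y (τ sv) := by
        rw [hD, (hp i hi).2]
        exact infDist_le_dist_of_mem (mem_range_self sv)
      have h2 : dist y (τ sv) = dist z (ξ (τ sv)) := by rw [hzy, ξ.dist_eq]
      have h3 := dist_triangle z (τ (T (S11.nxt i))) (ξ (τ sv))
      have h4 : dist z (τ (T (S11.nxt i))) = D' := by rw [hpj]
      linarith
    have hminz : ∀ v, dist z (τ (T (S11.nxt i))) ≤ dist z (τ v) := hmin _ hjne
    have hminy : ∀ v, dist y (τ (T i)) ≤ dist y (τ v) := hmin i hi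
    have hb : dist (τ (T (S11.nxt i))) (ξ (τ (T i))) ≤ 32 * δ := by
      have h1 : dist z (τ sw) ≤ D + 9 * δ := by
        have := dist_triangle z (ξ (τ (T i))) (τ sw)
        linarith
      have hPL := S11.projLem hδ hyp hτline z (T (S11.nxt i)) sw hminz
      have h5 : dist z (τ (T (S11.nxt i))) = D' := by rw [hpj]
      have h7 : dist (τ (T (S11.nxt i))) (τ sw) = |T (S11.nxt i) - sw| := hτline _ _
      have h8 := dist_triangle (τ (T (S11.nxt i))) (τ sw) (ξ (τ (T i)))
      have h9 : dist (τ sw) (ξ (τ (T i))) = dist (ξ (τ (T i))) (τ sw) := dist_comm _ _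
      linarith
    have hc : L - 32 * δ ≤ |T i - T (S11.nxt i)| := by
      have h1 := hdisp (τ (T i))
      have h2 := dist_triangle (τ (T i)) (τ (T (S11.nxt i))) (ξ (τ (T i)))
      have h3 : dist (τ (T i)) (τ (T (S11.nxt i))) = |T i - T (S11.nxt i)| := hτline _ _
      linarith
    have hfar : 6 * δ < |T i - T (S11.nxt i)| := by linarith
    have hd := S11.twoProj hδ hyp hτline y z (T i) (T (S11.nxt i)) hminy hminz hfar
    have h5 : dist y (τ (T i)) = D := by rw [hpi]
    have h6 : dist z (τ (T (S11.nxt i))) = D' := by rw [hpj]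
    have h7 : dist y z = dist O (ξ O) := by
      rw [hzy, hy]; exact S11.disp_orbit ξ O i
    have : 2 * D ≤ 53 * δ + ε := by linarith
    linarith
  -- Part 2
  have hadj_nxt : ∀ i j : ℤ, AdjIdx i j → i ≠ 0 ∧ j = S11.nxt i := by
    rintro i j ⟨hi, hj, (rfl | ⟨rfl, rfl⟩)⟩
    · exact ⟨hi, (show S11.nxt i = i + 1 from if_neg (by omega)).symm⟩
    · exact ⟨by norm_num, rfl⟩
  have part2 : ∀ i j : ℤ, AdjIdx i j → |L - dist (p i) (p j)| ≤ 56 * δ + ε := by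
    intro i j hadj
    obtain ⟨hi, hjeq⟩ := hadj_nxt i j hadj
    subst hjeq
    have hjne : S11.nxt i ≠ 0 := S11.nxt_ne_zero i hi
    have hxy : dist (orbitPt ξ O i) (orbitPt ξ O (S11.nxt i)) = dist O (ξ O) := by
      rw [S11.orbit_nxt ξ O i hi]; exact S11.disp_orbit ξ O i
    have h1 := part1 i hi
    have h2 := part1 _ hjne
    have t1 := dist_triangle4 (orbitPt ξ O i) (p i) (p (S11.nxt i))
      (orbitPt ξ O (S11.nxt i))
    have t2 := dist_triangle4 (p i) (orbitPt ξ O i) (orbitPt ξ O (S11.nxt i))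
      (p (S11.nxt i))
    have c1 : dist (p i) (orbitPt ξ O i) = dist (orbitPt ξ O i) (p i) := dist_comm _ _
    have c2 : dist (p (S11.nxt i)) (orbitPt ξ O (S11.nxt i))
        = dist (orbitPt ξ O (S11.nxt i)) (p (S11.nxt i)) := dist_comm _ _
    have hLu := hdisp O
    rw [abs_le]
    constructor <;> [linarith; linarith]
  refine ⟨part1, part2, ?_⟩
  -- Part 3
  have hstep : ∀ i : ℤ, i ≠ 0 →
      L - 57*δ ≤ |T i - T (S11.nxt i)| ∧ |T i - T (S11.nxt i)| ≤ L + 57*δ := by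
    intro i hi
    have hjne : S11.nxt i ≠ 0 := S11.nxt_ne_zero i hi
    have hadj : AdjIdx i (S11.nxt i) := by
      refine ⟨hi, hjne, ?_⟩
      by_cases h : i = -1
      · right; exact ⟨h, by rw [h]; decide⟩
      · left; exact if_neg h
    have h2 := part2 i _ hadj
    have h3 : dist (p i) (p (S11.nxt i)) = |T i - T (S11.nxt i)| := by
      rw [← hT i hi, ← hT _ hjne, hτline]
    rw [h3, abs_le] at h2
    constructor <;> linarith [h2.1, h2.2]
  have hLδ : 4 * δ < L := by linarith
  have hskip : ∀ i : ℤ, i ≠ 0 → 2*L - 60*δ ≤ |T i - T (S11.nxt (S11.nxt i))| := by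
    intro i hi
    have hj : S11.nxt i ≠ 0 := S11.nxt_ne_zero i hi
    have hk : S11.nxt (S11.nxt i) ≠ 0 := S11.nxt_ne_zero _ hj
    have hx2 : dist (orbitPt ξ O i) (orbitPt ξ O (S11.nxt (S11.nxt i)))
        = dist (orbitPt ξ O i) (ξ (ξ (orbitPt ξ O i))) := by
      rw [S11.orbit_nxt ξ O _ hj, S11.orbit_nxt ξ O i hi]
    have hd2 := S11.disp2 hδ hyp hgeo ξ hdisp hLδ (orbitPt ξ O i)
    have hdy := hdisp (orbitPt ξ O i)
    have t1 := dist_triangle4 (orbitPt ξ O i) (p i) (p (S11.nxt (S11.nxt i)))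
      (orbitPt ξ O (S11.nxt (S11.nxt i)))
    have h3 : dist (p i) (p (S11.nxt (S11.nxt i)))
        = |T i - T (S11.nxt (S11.nxt i))| := by
      rw [← hT i hi, ← hT _ hk, hτline]
    have c2 : dist (p (S11.nxt (S11.nxt i))) (orbitPt ξ O (S11.nxt (S11.nxt i)))
        = dist (orbitPt ξ O (S11.nxt (S11.nxt i))) (p (S11.nxt (S11.nxt i))) :=
      dist_comm _ _
    have hdisp2' : dist (orbitPt ξ O i) (ξ (orbitPt ξ O i)) = dist O (ξ O) :=
      S11.disp_orbit ξ O i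
    linarith [part1 i hi, part1 _ hk]
  have hne_step : ∀ i : ℤ, i ≠ 0 → T i ≠ T (S11.nxt i) := by
    intro i hi heq
    have h := (hstep i hi).1
    rw [heq, sub_self, abs_zero] at h
    linarith
  have coher : ∀ i : ℤ, i ≠ 0 →
      (T i < T (S11.nxt i) ↔ T (S11.nxt i) < T (S11.nxt (S11.nxt i))) := by
    intro i hi
    have hj : S11.nxt i ≠ 0 := S11.nxt_ne_zero i hi
    obtain ⟨s1l, s1u⟩ := hstep i hi
    obtain ⟨s2l, s2u⟩ := hstep _ hj
    have hsk := hskip i hi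
    obtain ⟨h1a, h1b⟩ := abs_le.mp s1u
    obtain ⟨h2a, h2b⟩ := abs_le.mp s2u
    rcases le_abs.mp hsk with h3 | h3 <;>
      (constructor <;> intro h <;> by_contra h' <;> push_neg at h' <;> linarith)
  have hchain : ∀ P : ℤ → Prop, (∀ i : ℤ, i ≠ 0 → (P i ↔ P (S11.nxt i))) → P 1 →
      ∀ i : ℤ, i ≠ 0 → P i := by
    intro P hP h1 i hi
    have hn1 : S11.nxt (-1) = 1 := rfl
    rcases hi.lt_or_gt with hneg | hpos
    · have hdown : ∀ n : ℤ, n ≤ -1 → P n := by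
        refine fun n hn => Int.le_induction_down (motive := fun n _ => P n) ?_ ?_ n hn
        · exact (hP (-1) (by norm_num)).mpr (by rw [hn1]; exact h1)
        · intro n hn hPn
          have hne : n - 1 ≠ 0 := by omega
          have hnn : S11.nxt (n-1) = n := by
            unfold S11.nxt; rw [if_neg (by omega : n - 1 ≠ -1)]; ring
          exact (hP (n-1) hne).mpr (by rw [hnn]; exact hPn)
      exact hdown i (by omega)
    · have hup : ∀ n : ℤ, 1 ≤ n → P n := by
        refine fun n hn => Int.le_induction (motive := fun n _ => P n) ?_ ?_ n hn
        · exact h1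
        · intro n hn hPn
          have hnn : S11.nxt n = n + 1 := if_neg (by omega)
          have := (hP n (by omega)).mp hPn
          rwa [hnn] at this
      exact hup i hpos
  set t : ℤ → ℝ := fun i => if i = 0 then (T (-1) + T 1)/2 else T i with htdef
  have htp : ∀ i : ℤ, i ≠ 0 → τ (t i) = p i := by
    intro i hi
    simp only [htdef, if_neg hi]
    exact hT i hi
  have hn1 : S11.nxt (-1) = 1 := rfl
  rcases lt_trichotomy (T 1) (T (S11.nxt 1)) with hcase | hcase | hcase
  · have hall : ∀ i : ℤ, i ≠ 0 → T i < T (S11.nxt i) :=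
      hchain (fun i => T i < T (S11.nxt i)) coher hcase
    have hm1 : T (-1) < T 1 := by
      have h := hall (-1) (by norm_num)
      rwa [hn1] at h
    have hmono : ∀ k : ℤ, t k < t (k + 1) := by
      intro k
      rcases eq_or_ne k 0 with rfl | hk0
      · simp only [htdef]
        norm_num
        linarith
      rcases eq_or_ne k (-1) with rfl | hkm1
      · simp only [htdef]
        norm_num
        linarith
      · have hk1 : k + 1 ≠ 0 := by omega
        simp only [htdef, if_neg hk0, if_neg hk1]
        have h := hall k hk0
        rwa [show S11.nxt k = k + 1 from if_neg hkm1] at h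
    exact ⟨t, htp, Or.inl fun i j _ _ hij => strictMono_int_of_lt_succ hmono hij⟩
  · exact absurd hcase (hne_step 1 (by norm_num))
  · have hQcoh : ∀ i : ℤ, i ≠ 0 →
        ((T (S11.nxt i) < T i) ↔ (T (S11.nxt (S11.nxt i)) < T (S11.nxt i))) := by
      intro i hi
      have h1 := coher i hi
      have hne1 := hne_step i hi
      have hne2 := hne_step _ (S11.nxt_ne_zero i hi)
      constructor
      · intro h
        rcases lt_trichotomy (T (S11.nxt i)) (T (S11.nxt (S11.nxt i))) with h' | h' | h'
        · exact absurd (h1.mpr h') (not_lt.mpr (le_of_lt h))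
        · exact absurd h' hne2
        · exact h'
      · intro h
        rcases lt_trichotomy (T i) (T (S11.nxt i)) with h' | h' | h'
        · exact absurd (h1.mp h') (not_lt.mpr (le_of_lt h))
        · exact absurd h' hne1
        · exact h'
    have hall : ∀ i : ℤ, i ≠ 0 → T (S11.nxt i) < T i :=
      hchain (fun i => T (S11.nxt i) < T i) hQcoh hcase
    have hm1 : T 1 < T (-1) := by
      have h := hall (-1) (by norm_num)
      rwa [hn1] at h
    have hmono : ∀ k : ℤ, t (k + 1) < t k := by
      intro k
      rcases eq_or_ne k 0 with rfl | hk0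
      · simp only [htdef]
        norm_num
        linarith
      rcases eq_or_ne k (-1) with rfl | hkm1
      · simp only [htdef]
        norm_num
        linarith
      · have hk1 : k + 1 ≠ 0 := by omega
        simp only [htdef, if_neg hk0, if_neg hk1]
        have h := hall k hk0
        rwa [show S11.nxt k = k + 1 from if_neg hkm1] at h
    exact ⟨t, htp, Or.inr fun i j _ _ hij => strictAnti_int_of_succ_lt hmono hij⟩
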